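/- Let m ≥ 3 be an integer, ℓ a prime number not dividing m, and f := ℓ·m. Let ζ be a primitive f-th root of unity in a field of characteristic zero, and set ζ_m := ζ^ℓ, a primitive m-th root of unity. Let u be a positive integer with u·ℓ ≡ 1 (mod m). Then N_{ℚ(ζ)/ℚ(ζ_m)}(1 − ζ) · (1 − ζ_m^u) = 1 − ζ_m, where N_{ℚ(ζ)/ℚ(ζ_m)} denotes the field norm from the f-th cyclotomic field ℚ(ζ) to its subfield ℚ(ζ_m). -/

import Mathlib

set_option maxHeartbeats 1600000


open IntermediateField Polynomial

theorem statement3 {K : Type*} [Field K] [CharZero K] (m ℓ : ℕ) (hm : 3 ≤ m)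
    (hℓ : ℓ.Prime) (hnd : ¬ ℓ ∣ m) (ζ : K) (hζ : IsPrimitiveRoot ζ (ℓ * m))
    (u : ℕ) (hu : 0 < u) (huℓ : u * ℓ ≡ 1 [MOD m]) :
    Algebra.norm ℚ⟮ζ ^ ℓ⟯
        (1 - IntermediateField.AdjoinSimple.gen ℚ⟮ζ ^ ℓ⟯ ζ)
      * (1 - IntermediateField.AdjoinSimple.gen ℚ (ζ ^ ℓ) ^ u)
      = 1 - IntermediateField.AdjoinSimple.gen ℚ (ζ ^ ℓ) := by
  have hm0 : 0 < m := by omega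
  have hℓ1 : 1 < ℓ := hℓ.one_lt
  have hℓ0 : 0 < ℓ := hℓ.pos
  have hf0 : 0 < ℓ * m := Nat.mul_pos hℓ0 hm0
  set F : IntermediateField ℚ K := ℚ⟮ζ ^ ℓ⟯ with hF
  set g : F := IntermediateField.AdjoinSimple.gen ℚ (ζ ^ ℓ) with hgdef
  set x : F⟮ζ⟯ := IntermediateField.AdjoinSimple.gen F ζ with hxdef
  have hφg : algebraMap F K g = ζ ^ ℓ := IntermediateField.AdjoinSimple.algebraMap_gen ℚ (ζ ^ ℓ)
  have hinj : Function.Injective (algebraMap F K) := (algebraMap F K).injective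
  -- primitive roots
  have hζm : IsPrimitiveRoot (ζ ^ ℓ) m := hζ.pow hf0 rfl
  have hζℓ : IsPrimitiveRoot (ζ ^ m) ℓ := hζ.pow hf0 (mul_comm ℓ m)
  -- integrality
  have hintζF : IsIntegral F ζ := (hζ.isIntegral hf0).tower_top
  have hintζℚ : IsIntegral ℚ ζ := (hζ.isIntegral hf0).tower_top
  have hintζmℚ : IsIntegral ℚ (ζ ^ ℓ) := (hζm.isIntegral hm0).tower_top
  set p : Polynomial F := minpoly F ζ with hpdef
  set d : ℕ := p.natDegree with hddef
  -- degree computation : d = ℓ - 1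
  have hrank1 : Module.finrank ℚ ℚ⟮ζ⟯ = (ℓ * m).totient := by
    rw [IntermediateField.adjoin.finrank hintζℚ, ← Polynomial.cyclotomic_eq_minpoly_rat hζ hf0,
      natDegree_cyclotomic]
  have hrank2 : Module.finrank ℚ F = m.totient := by
    rw [hF, IntermediateField.adjoin.finrank hintζmℚ,
      ← Polynomial.cyclotomic_eq_minpoly_rat hζm hm0, natDegree_cyclotomic]
  have hFle : F ≤ ℚ⟮ζ⟯ := by
    rw [hF, IntermediateField.adjoin_simple_le_iff]
    exact pow_mem (IntermediateField.mem_adjoin_simple_self ℚ ζ) ℓ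
  have hres : IntermediateField.restrictScalars ℚ F⟮ζ⟯ = ℚ⟮ζ⟯ := by
    refine (IntermediateField.restrictScalars_adjoin (K := F) (S := {ζ})).trans ?_
    apply le_antisymm
    · rw [IntermediateField.adjoin_le_iff]
      rintro y (hy | hy)
      · exact hFle hy
      · rw [Set.mem_singleton_iff] at hy
        rw [hy]
        exact IntermediateField.mem_adjoin_simple_self ℚ ζ
    · exact IntermediateField.adjoin.mono ℚ _ _ Set.subset_union_right
  have htower : Module.finrank ℚ F * Module.finrank F F⟮ζ⟯ = Module.finrank ℚ ℚ⟮ζ⟯ := by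
    rw [← hres]
    exact Module.finrank_mul_finrank ℚ F F⟮ζ⟯
  have hfinL : Module.finrank F F⟮ζ⟯ = d := IntermediateField.adjoin.finrank hintζF
  have htotpos : 0 < m.totient := Nat.totient_pos.mpr hm0
  have hd : d = ℓ - 1 := by
    have hcop : Nat.Coprime ℓ m := (Nat.Prime.coprime_iff_not_dvd hℓ).mpr hnd
    have h1 : Module.finrank ℚ F * Module.finrank F F⟮ζ⟯ = ℓ.totient * m.totient := by
      rw [htower, hrank1, Nat.totient_mul hcop]
    rw [hrank2, hfinL, Nat.totient_prime hℓ, mul_comm (ℓ - 1) m.totient] at h1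
    exact Nat.eq_of_mul_eq_mul_left htotpos h1
  -- g has the right multiplicative relations
  have hgm : g ^ m = 1 := by
    apply hinj
    rw [map_pow, hφg, ← pow_mul, map_one, hζ.pow_eq_one]
  have hmod : u * ℓ % m = 1 := by
    have h1m : 1 % m = 1 := Nat.mod_eq_of_lt (by omega)
    simpa [Nat.ModEq, h1m] using huℓ
  have hward : g ^ (u * ℓ) = g := by
    conv_lhs => rw [← Nat.div_add_mod (u * ℓ) m, hmod]
    rw [pow_add, pow_mul, hgm, one_pow, pow_one, one_mul]
  -- minpoly divides X^ℓ - C g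
  have hdvd : p ∣ X ^ ℓ - C g := by
    apply minpoly.dvd
    rw [map_sub, map_pow, aeval_X, aeval_C, hφg, sub_self]
  obtain ⟨r, hr⟩ := hdvd
  have hmo : (X ^ ℓ - C g).Monic := monic_X_pow_sub_C g hℓ0.ne'
  have hpm : p.Monic := minpoly.monic hintζF
  have hrm : r.Monic := hpm.of_mul_monic_left (hr ▸ hmo)
  have hdegr : r.natDegree = 1 := by
    have h1 : (X ^ ℓ - C g).natDegree = ℓ := natDegree_X_pow_sub_C
    rw [hr, hpm.natDegree_mul hrm, ← hddef, hd] at h1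
    omega
  -- `g ^ u` is not a root of p
  have hne : eval (g ^ u) p ≠ 0 := by
    intro h0
    have hdvd' : X - C (g ^ u) ∣ p := dvd_iff_isRoot.mpr h0
    have hassoc : Associated (X - C (g ^ u)) p :=
      (irreducible_X_sub_C (g ^ u)).associated_of_dvd (minpoly.irreducible hintζF) hdvd'
    have heq : p = X - C (g ^ u) :=
      (eq_of_monic_of_associated (monic_X_sub_C _) hpm hassoc).symm
    have hζeq : ζ = algebraMap F K (g ^ u) := by
      have haev := minpoly.aeval F ζ
      rw [← hpdef, heq, map_sub, aeval_X, aeval_C, sub_eq_zero] at haev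
      exact haev
    rw [map_pow, hφg, ← pow_mul] at hζeq
    have hℓu1 : 1 ≤ ℓ * u := by
      have := Nat.mul_pos hℓ0 hu
      omega
    have h2 : ζ ^ (ℓ * u - 1 + 1) = ζ := by rw [Nat.sub_add_cancel hℓu1]; exact hζeq.symm
    rw [pow_succ] at h2
    have hζne : ζ ≠ 0 := hζ.ne_zero hf0.ne'
    have h3 : ζ ^ (ℓ * u - 1) = 1 := by
      have := mul_right_cancel₀ hζne (h2.trans (one_mul ζ).symm)
      exact this
    have hdd : ℓ * m ∣ ℓ * u - 1 := (hζ.pow_eq_one_iff_dvd _).mp h3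
    have h4 : ℓ ∣ ℓ * u - 1 := dvd_trans (dvd_mul_right ℓ m) hdd
    have h5 : ℓ ∣ ℓ * u - (ℓ * u - 1) := Nat.dvd_sub (dvd_mul_right ℓ u) h4
    have h6 : ℓ * u - (ℓ * u - 1) = 1 := by omega
    rw [h6] at h5
    exact absurd (Nat.le_of_dvd one_pos h5) (by omega)
  -- identify r with X - C (g ^ u)
  have hra : r = X - C (g ^ u) := by
    have hxc : r = X + C (r.coeff 0) := hrm.eq_X_add_C hdegr
    have hev : eval (g ^ u) (X ^ ℓ - C g) = 0 := by
      rw [eval_sub, eval_pow, eval_X, eval_C, ← pow_mul, hward, sub_self]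
    rw [hr, eval_mul] at hev
    have h2 : eval (g ^ u) r = 0 := by
      rcases mul_eq_zero.mp hev with h | h
      · exact absurd h hne
      · exact h
    rw [hxc, eval_add, eval_X, eval_C] at h2
    have : r.coeff 0 = -(g ^ u) := by linear_combination h2
    rw [hxc, this, map_neg, sub_eq_add_neg]
  have H : X ^ ℓ - C g = p * (X - C (g ^ u)) := by rw [hr, hra]
  -- evaluate at 1
  have hH1 : (1 : F) - g = eval 1 p * (1 - g ^ u) := by
    have := congrArg (eval 1) H
    rwa [eval_sub, eval_pow, eval_X, eval_C, one_pow, eval_mul, eval_sub, eval_X, eval_C] at this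
  -- splitting facts
  have hsplX : (((X : Polynomial F) ^ ℓ - C g).map (algebraMap F K)).Splits := by
    have hmap : ((X : Polynomial F) ^ ℓ - C g).map (algebraMap F K) = X ^ ℓ - C (ζ ^ ℓ) := by
      rw [Polynomial.map_sub, Polynomial.map_pow, map_X, map_C, hφg]
    rw [hmap]
    exact X_pow_sub_C_splits_of_isPrimitiveRoot hζℓ rfl
  have hsplp : (p.map (algebraMap F K)).Splits :=
    Splits.of_dvd hsplX (Polynomial.map_ne_zero hmo.ne_zero) (Polynomial.map_dvd _ ⟨_, hr⟩)
  -- minpoly of x over F equals p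
  have hφx : algebraMap F⟮ζ⟯ K x = ζ := IntermediateField.AdjoinSimple.algebraMap_gen F ζ
  have hminx : minpoly F x = p := by
    have h := minpoly.algebraMap_eq (A := ↥F) (algebraMap (↥F⟮ζ⟯) K).injective x
    rw [hφx] at h
    exact h.symm
  have hintx : IsIntegral F x := by
    rw [← isIntegral_algebraMap_iff (algebraMap F⟮ζ⟯ K).injective, hφx]
    exact hintζF
  -- minpoly of y = 1 - x
  set y : F⟮ζ⟯ := 1 - x with hydef
  have hyint : IsIntegral F y := IsIntegral.sub isIntegral_one hintx
  have hy' : y = -x + algebraMap F F⟮ζ⟯ 1 := by rw [map_one, hydef]; ring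
  have hq : minpoly F y = C ((-1 : F) ^ d) * p.comp (C 1 - X) := by
    rw [hy', minpoly.add_algebraMap, minpoly.neg, hminx, ← hddef, mul_comp, comp_assoc,
      neg_comp, X_comp, neg_sub]
    congr 1
    rw [show ((-1 : Polynomial F) ^ d) = C ((-1 : F) ^ d) by rw [map_pow, map_neg, map_one],
      C_comp]
  have hC1X : (C (1 : F) - X).natDegree = 1 := by
    rw [show C (1 : F) - X = -(X - C 1) by ring, natDegree_neg, natDegree_X_sub_C]
  have hdq : (minpoly F y).natDegree = d := by
    rw [hq, natDegree_C_mul (pow_ne_zero d (neg_ne_zero.mpr (one_ne_zero : (1 : F) ≠ 0))), natDegree_comp, hC1X, mul_one]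
  have hsply : ((minpoly F y).map (algebraMap F K)).Splits := by
    rw [hq, Polynomial.map_mul, map_C]
    refine Splits.C_mul ?_ _
    have hcc : p.comp (C 1 - X) = (p.comp (-X)).comp (X - C 1) := by
      rw [comp_assoc, neg_comp, X_comp, neg_sub]
    rw [hcc, Polynomial.map_comp, Polynomial.map_comp, Polynomial.map_neg, map_X,
      Polynomial.map_sub, map_X, map_C, map_one]
    exact (hsplp.comp_neg_X).comp_X_sub_C 1
  -- norm computation
  haveI : FiniteDimensional F F⟮ζ⟯ := IntermediateField.adjoin.finiteDimensional hintζF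
  haveI : CharZero F := charZero_of_injective_algebraMap (algebraMap ℚ F).injective
  haveI : Algebra.IsIntegral (↥F) ↥F⟮ζ⟯ := Algebra.IsIntegral.of_finite _ _
  haveI : Algebra.IsSeparable (↥F) ↥F⟮ζ⟯ := Algebra.IsSeparable.of_integral _ _
  have hnorm := Algebra.norm_eq_prod_roots (K := F) (L := F⟮ζ⟯) (F := K) hsply
  have htop : (IntermediateField.adjoin (↥F) {y} : IntermediateField (↥F) ↥F⟮ζ⟯) = ⊤ := by
    refine IntermediateField.eq_of_le_of_finrank_eq le_top ?_
    rw [IntermediateField.adjoin.finrank hyint, hdq, IntermediateField.finrank_top', hfinL]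
  rw [htop, IntermediateField.finrank_top, pow_one] at hnorm
  -- compute the product of roots
  set P : Polynomial K := (minpoly F y).map (algebraMap F K) with hPdef
  have hPm : P.Monic := (minpoly.monic hyint).map _
  have hPs : P.Splits := hsply
  have hcoeff := hPs.coeff_zero_eq_prod_roots_of_monic hPm
  have hPdeg : P.natDegree = d := by
    rw [hPdef, natDegree_map, hdq]
  have hc0 : P.coeff 0 = algebraMap F K ((-1 : F) ^ d * eval 1 p) := by
    rw [hPdef, coeff_map]
    congr 1
    rw [hq, coeff_zero_eq_eval_zero, eval_mul, eval_C, eval_comp, eval_sub, eval_C, eval_X,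
      sub_zero]
  have hprod : P.roots.prod = algebraMap F K (eval 1 p) := by
    have hsq : ((-1 : K) ^ d) * ((-1 : K) ^ d) = 1 := by
      rw [← pow_add]
      exact Even.neg_one_pow ⟨d, rfl⟩
    have h1 : P.roots.prod = (-1 : K) ^ d * P.coeff 0 := by
      rw [hcoeff, hPdeg, ← mul_assoc, hsq, one_mul]
    rw [h1, hc0, map_mul, ← mul_assoc, map_pow, map_neg, map_one, hsq, one_mul]
  have hnormval : Algebra.norm F y = eval 1 p := by
    apply hinj
    rw [hnorm]
    exact hprod
  -- finish
  show Algebra.norm F y * (1 - g ^ u) = 1 - g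
  rw [hnormval, ← hH1]
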